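/- Let α, β, γ : ℝ² → ℝ be differentiable functions of (u,v). On U = {(u,v,r,θ) ∈ ℝ⁴ : r ≠ 0} define the null vierbein k : U → (4×4 real matrices) with rows k⁰ = (1, 0, 0, 0), k¹ = (α(u,v), β(u,v), 0, 0), k² = (0, 0, γ(u,v), 0), k³ = (0, 0, 0, γ(u,v)·r) (i.e., the coframe k¹ = du, k² = α du + β dv, k³ = γ dr, k⁴ = γ r dθ). Let X₁ = (0,0, −cos θ, sin θ/r), X₂ = (0,0, sin θ, cos θ/r), X₃ = (0,0,0,1); let the only nonzero f-components be f₁^3 = sin θ / r, f₂^3 = cos θ / r; and let λ₁, λ₂, λ₃ be the e(2)-representation matrices λ₁ with entries (1,3) = −1, (3,0) = −1; λ₂ with entries (1,2) = −1, (2,0) = −1; λ₃ with entries (2,3) = 1, (3,2) = −1 (all others zero). Then k is a symmetry frame for the E(2) symmetry group: for all I ∈ {1,2,3}, all a, μ ∈ {0,1,2,3} and all x ∈ U, Σ_ν X_I^ν(x) ∂_ν k^a_μ(x) + Σ_ν ∂_μ X_I^ν(x) k^a_ν(x) = Σ_î f_I^î(x) Σ_b (λ_î)^a_b k^b_μ(x).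 -/

import Mathlib

open Finset

/- Coordinates are `(u, v, r, θ) = (x 0, x 1, x 2, x 3)`. -/

/-- The μ-th partial derivative of a function on ℝ⁴. -/
noncomputable def pd (f : (Fin 4 → ℝ) → ℝ) (μ : Fin 4) (x : Fin 4 → ℝ) : ℝ :=
  fderiv ℝ f x (Pi.single μ 1)

/-- The E(2) symmetry vector fields X₁, X₂, X₃. -/
noncomputable def XE2 : Fin 3 → (Fin 4 → ℝ) → (Fin 4 → ℝ) :=
  ![fun x => ![0, 0, -Real.cos (x 3), Real.sin (x 3) / x 2],
    fun x => ![0, 0, Real.sin (x 3), Real.cos (x 3) / x 2],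
    fun _ => ![0, 0, 0, 1]]

/-- The functions `f I î`; the only nonzero components are
`f₁³ = sin θ / r` and `f₂³ = cos θ / r`. -/
noncomputable def fE2 : Fin 3 → Fin 3 → (Fin 4 → ℝ) → ℝ :=
  ![![fun _ => 0, fun _ => 0, fun x => Real.sin (x 3) / x 2],
    ![fun _ => 0, fun _ => 0, fun x => Real.cos (x 3) / x 2],
    ![fun _ => 0, fun _ => 0, fun _ => 0]]

/-- The e(2)-representation matrices λ₁, λ₂, λ₃. -/
def lamE2 : Fin 3 → Fin 4 → Fin 4 → ℝ :=
  ![![![0, 0, 0, 0], ![0, 0, 0, -1], ![0, 0, 0, 0], ![-1, 0, 0, 0]],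
    ![![0, 0, 0, 0], ![0, 0, -1, 0], ![-1, 0, 0, 0], ![0, 0, 0, 0]],
    ![![0, 0, 0, 0], ![0, 0, 0, 0], ![0, 0, 0, 1], ![0, 0, -1, 0]]]

/-- The null vierbein `k¹ = du`, `k² = α du + β dv`, `k³ = γ dr`, `k⁴ = γ r dθ`,
as a matrix field `k x a μ`. -/
noncomputable def kE2 (α β γ : ℝ × ℝ → ℝ) (x : Fin 4 → ℝ) : Fin 4 → Fin 4 → ℝ :=
  ![![1, 0, 0, 0],
    ![α (x 0, x 1), β (x 0, x 1), 0, 0],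
    ![0, 0, γ (x 0, x 1), 0],
    ![0, 0, 0, γ (x 0, x 1) * x 2]]

noncomputable def P (i : Fin 4) : (Fin 4 → ℝ) →L[ℝ] ℝ := ContinuousLinearMap.proj i

@[simp] lemma P_apply (i : Fin 4) (v : Fin 4 → ℝ) : P i v = v i := rfl

lemma pd_of_hasFDerivAt {f : (Fin 4 → ℝ) → ℝ} {L : (Fin 4 → ℝ) →L[ℝ] ℝ} {x : Fin 4 → ℝ}
    (h : HasFDerivAt f L x) (μ : Fin 4) : pd f μ x = L (Pi.single μ 1) := by
  rw [pd, h.fderiv]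

lemma hproj (i : Fin 4) (x : Fin 4 → ℝ) :
    HasFDerivAt (fun y : Fin 4 → ℝ => y i) (P i) x :=
  (P i).hasFDerivAt

lemma hinv (x : Fin 4 → ℝ) (hx : x 2 ≠ 0) :
    HasFDerivAt (fun y : Fin 4 → ℝ => (y 2)⁻¹)
      ((ContinuousLinearMap.smulRight (1 : ℝ →L[ℝ] ℝ) (-(x 2 ^ 2)⁻¹)).comp (P 2)) x :=
  (hasFDerivAt_inv hx).comp x (hproj 2 x)

lemma pdc (c : ℝ) (μ : Fin 4) (x : Fin 4 → ℝ) : pd (fun _ => c) μ x = 0 := by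
  simp [pd]

lemma pd_sin (μ : Fin 4) (x : Fin 4 → ℝ) :
    pd (fun y => Real.sin (y 3)) μ x = Real.cos (x 3) * (Pi.single μ 1 : Fin 4 → ℝ) 3 := by
  rw [pd_of_hasFDerivAt ((hproj 3 x).sin) μ]; simp

lemma pd_neg_cos (μ : Fin 4) (x : Fin 4 → ℝ) :
    pd (fun y => -Real.cos (y 3)) μ x = Real.sin (x 3) * (Pi.single μ 1 : Fin 4 → ℝ) 3 := by
  rw [pd_of_hasFDerivAt (f := fun y => -Real.cos (y 3)) ((hproj 3 x).cos.neg) μ]; simp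

lemma div_as_mul_inv (f : (Fin 4 → ℝ) → ℝ) :
    (fun y : Fin 4 → ℝ => f y / y 2) = fun y => f y * (y 2)⁻¹ := by
  funext y; rw [div_eq_mul_inv]

lemma pd_sin_div (μ : Fin 4) (x : Fin 4 → ℝ) (hx : x 2 ≠ 0) :
    pd (fun y => Real.sin (y 3) / y 2) μ x
      = Real.cos (x 3) / x 2 * (Pi.single μ 1 : Fin 4 → ℝ) 3
        - Real.sin (x 3) / (x 2)^2 * (Pi.single μ 1 : Fin 4 → ℝ) 2 := by
  rw [div_as_mul_inv, pd_of_hasFDerivAt (f := fun y => Real.sin (y 3) * (y 2)⁻¹) ((hproj 3 x).sin.mul (hinv x hx)) μ]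
  simp [div_eq_mul_inv]
  ring

lemma pd_cos_div (μ : Fin 4) (x : Fin 4 → ℝ) (hx : x 2 ≠ 0) :
    pd (fun y => Real.cos (y 3) / y 2) μ x
      = -(Real.sin (x 3)) / x 2 * (Pi.single μ 1 : Fin 4 → ℝ) 3
        - Real.cos (x 3) / (x 2)^2 * (Pi.single μ 1 : Fin 4 → ℝ) 2 := by
  rw [div_as_mul_inv, pd_of_hasFDerivAt (f := fun y => Real.cos (y 3) * (y 2)⁻¹) ((hproj 3 x).cos.mul (hinv x hx)) μ]
  simp [div_eq_mul_inv]
  ring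

lemma pd_comp (g : ℝ × ℝ → ℝ) (hg : Differentiable ℝ g) (μ : Fin 4) (x : Fin 4 → ℝ) :
    pd (fun y => g (y 0, y 1)) μ x
      = fderiv ℝ g (x 0, x 1) ((Pi.single μ 1 : Fin 4 → ℝ) 0, (Pi.single μ 1 : Fin 4 → ℝ) 1) := by
  have h01 : HasFDerivAt (fun y : Fin 4 → ℝ => (y 0, y 1)) ((P 0).prod (P 1)) x :=
    ((P 0).prod (P 1)).hasFDerivAt
  have h : HasFDerivAt (fun y : Fin 4 → ℝ => g (y 0, y 1))
      ((fderiv ℝ g (x 0, x 1)).comp ((P 0).prod (P 1))) x := ((hg _).hasFDerivAt).comp x h01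
  rw [pd_of_hasFDerivAt h μ]; rfl

lemma pd_comp_mul (g : ℝ × ℝ → ℝ) (hg : Differentiable ℝ g) (μ : Fin 4) (x : Fin 4 → ℝ) :
    pd (fun y => g (y 0, y 1) * y 2) μ x
      = fderiv ℝ g (x 0, x 1) ((Pi.single μ 1 : Fin 4 → ℝ) 0, (Pi.single μ 1 : Fin 4 → ℝ) 1) * x 2
        + g (x 0, x 1) * (Pi.single μ 1 : Fin 4 → ℝ) 2 := by
  have h01 : HasFDerivAt (fun y : Fin 4 → ℝ => (y 0, y 1)) ((P 0).prod (P 1)) x :=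
    ((P 0).prod (P 1)).hasFDerivAt
  have hg4 : HasFDerivAt (fun y : Fin 4 → ℝ => g (y 0, y 1))
      ((fderiv ℝ g (x 0, x 1)).comp ((P 0).prod (P 1))) x := ((hg _).hasFDerivAt).comp x h01
  rw [pd_of_hasFDerivAt (f := fun y => g (y 0, y 1) * y 2) (hg4.mul (hproj 2 x)) μ]
  simp [ContinuousLinearMap.comp_apply, ContinuousLinearMap.prod_apply]
  ring


theorem stmt_18 (α β γ : ℝ × ℝ → ℝ)
    (hα : Differentiable ℝ α) (hβ : Differentiable ℝ β) (hγ : Differentiable ℝ γ) :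
    ∀ (I : Fin 3) (a μ : Fin 4) (x : Fin 4 → ℝ), x 2 ≠ 0 →
      (∑ ν, XE2 I x ν * pd (fun y => kE2 α β γ y a μ) ν x)
        + (∑ ν, pd (fun y => XE2 I y ν) μ x * kE2 α β γ x a ν)
      = ∑ i, fE2 I i x * ∑ b, lamE2 i a b * kE2 α β γ x b μ := by
  intro I a μ x hx
  fin_cases I <;> fin_cases a <;> fin_cases μ <;>
  · simp only [XE2, fE2, lamE2, kE2, Fin.sum_univ_four, Fin.sum_univ_three, Fin.isValue,
      Fin.reduceFinMk, Fin.mk_zero, Fin.mk_one,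
      Matrix.cons_val_zero, Matrix.cons_val_one, Matrix.head_cons, Matrix.cons_val_two,
      Matrix.tail_cons, Matrix.cons_val_three, Matrix.head_fin_const, Matrix.cons_val_fin_one]
    simp only [pdc, pd_sin, pd_neg_cos, pd_sin_div _ _ hx, pd_cos_div _ _ hx,
      pd_comp α hα, pd_comp β hβ, pd_comp γ hγ, pd_comp_mul γ hγ, Pi.single_apply,
      Fin.reduceEq, if_true, if_false, ite_true, ite_false]
    norm_num [(show ((0:ℝ),(0:ℝ)) = (0 : ℝ × ℝ) from rfl)]
    try field_simp
    try ring
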